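/- Let f : ℝ^M → ℝ^M be differentiable, let K ≥ 1, let h₀,…,h_{K−1} > 0 be step sizes, and for θ ∈ ℝ^M define the explicit Euler iterates x̃₀(θ) = θ and x̃_{k+1}(θ) = x̃_k(θ) + h_k f(x̃_k(θ)) for k = 0,…,K−1. Let J : ℝ^M → ℝ be differentiable and set R̃(θ) = J(x̃_K(θ)). Fix θ ∈ ℝ^M and define the adjoint iterates λ̃_K = ∇J(x̃_K(θ)) and λ̃_k = λ̃_{k+1} + h_k (Df(x̃_k(θ)))^⊤ λ̃_{k+1} for k = K−1,…,0, where Df denotes the Jacobian matrix of f. Then λ̃₀ = ∇R̃(θ), the gradient of R̃ at θ. -/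

import Mathlib

/-- Explicit Euler iterates `x̃₀(θ) = θ`, `x̃_{k+1}(θ) = x̃_k(θ) + h_k f(x̃_k(θ))`. -/
noncomputable def eulerIter {E : Type*} [NormedAddCommGroup E] [NormedSpace ℝ E]
    (f : E → E) (h : ℕ → ℝ) (θ : E) : ℕ → E
  | 0 => θ
  | k + 1 => eulerIter f h θ k + h k • f (eulerIter f h θ k)

section Aux

variable {E : Type*} [NormedAddCommGroup E] [InnerProductSpace ℝ E] [CompleteSpace E]

/-- Peeling off the first Euler step. -/
lemma eulerIter_shift (f : E → E) (g : ℕ → ℝ) (x : E) :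
    ∀ m, eulerIter f g x (m + 1) = eulerIter f (fun i => g (i + 1)) (x + g 0 • f x) m := by
  intro m
  induction m with
  | zero => simp [eulerIter]
  | succ m ih =>
    show eulerIter f g x (m + 1) + g (m + 1) • f (eulerIter f g x (m + 1)) = _
    rw [ih]
    rfl

lemma eulerIter_diff (f : E → E) (hf : Differentiable ℝ f) (g : ℕ → ℝ) (n : ℕ) :
    Differentiable ℝ (fun x => eulerIter f g x n) := by
  induction n with
  | zero => exact differentiable_id
  | succ n ih =>
    show Differentiable ℝ (fun x => eulerIter f g x n + g n • f (eulerIter f g x n))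
    exact ih.add ((hf.comp ih).const_smul _)

open ContinuousLinearMap in
/-- Chain rule for gradients. -/
lemma gradient_comp (g : E → E) (φ : E → ℝ) (x : E)
    (hg : DifferentiableAt ℝ g x) (hφ : DifferentiableAt ℝ φ (g x)) :
    gradient (φ ∘ g) x =
      ContinuousLinearMap.adjoint (fderiv ℝ g x) (gradient φ (g x)) := by
  apply ext_inner_right ℝ
  intro v
  have h1 : fderiv ℝ (φ ∘ g) x = (fderiv ℝ φ (g x)).comp (fderiv ℝ g x) :=
    fderiv_comp x hφ hg
  rw [gradient, InnerProductSpace.toDual_symm_apply, h1,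
    ContinuousLinearMap.adjoint_inner_left]
  rw [gradient, InnerProductSpace.toDual_symm_apply]
  rfl

end Aux

/-- Discrete adjoint method for the explicit Euler scheme: with
`R̃(θ) = J(x̃_K(θ))`, the backward adjoint recursion
`λ_K = ∇J(x̃_K(θ))`, `λ_k = λ_{k+1} + h_k (Df(x̃_k(θ)))ᵀ λ_{k+1}` yields
`λ₀ = ∇R̃(θ)`. -/
theorem stmt_10 (M K : ℕ) (hK : 1 ≤ K)
    (f : EuclideanSpace ℝ (Fin M) → EuclideanSpace ℝ (Fin M))
    (hf : Differentiable ℝ f)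
    (h : ℕ → ℝ) (hh : ∀ k, k < K → 0 < h k)
    (J : EuclideanSpace ℝ (Fin M) → ℝ) (hJ : Differentiable ℝ J)
    (θ : EuclideanSpace ℝ (Fin M))
    (lam : ℕ → EuclideanSpace ℝ (Fin M))
    (hlamK : lam K = gradient J (eulerIter f h θ K))
    (hlam : ∀ k, k < K → lam k = lam (k + 1) +
      h k • (ContinuousLinearMap.adjoint (fderiv ℝ f (eulerIter f h θ k))) (lam (k + 1))) :
    lam 0 = gradient (fun θ' => J (eulerIter f h θ' K)) θ := by
  -- the tail map from step k
  have key : ∀ j, j ≤ K →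
      lam (K - j) = gradient
        (fun x => J (eulerIter f (fun i => h ((K - j) + i)) x j))
        (eulerIter f h θ (K - j)) := by
    intro j
    induction j with
    | zero =>
      intro _
      simpa [eulerIter] using hlamK
    | succ j ih =>
      intro hjK
      set k := K - (j + 1) with hk
      have hkK : k < K := by omega
      have hk1 : k + 1 = K - j := by omega
      have ihk : lam (k + 1) = gradient
          (fun x => J (eulerIter f (fun i => h ((k + 1) + i)) x j))
          (eulerIter f h θ (k + 1)) := by
        rw [hk1]; exact ih (by omega)
      -- rewrite the tail map using the shift lemma
      have e1 : (fun i => h (k + (i + 1))) = fun i => h ((k + 1) + i) := by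
        funext i; congr 1; omega
      have hshift : (fun x : EuclideanSpace ℝ (Fin M) =>
            J (eulerIter f (fun i => h (k + i)) x (j + 1))) =
          (fun y => J (eulerIter f (fun i => h ((k + 1) + i)) y j)) ∘
            (fun x => x + h k • f x) := by
        funext x
        simp only [Function.comp]
        rw [eulerIter_shift]
        simp only [e1, Nat.add_zero]
      have hgdiff : DifferentiableAt ℝ
          (fun x : EuclideanSpace ℝ (Fin M) => x + h k • f x) (eulerIter f h θ k) :=
        differentiableAt_fun_id.add ((hf _).fun_const_smul _)
      have hφdiff : DifferentiableAt ℝ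
          (fun y => J (eulerIter f (fun i => h ((k + 1) + i)) y j))
          (eulerIter f h θ (k + 1)) :=
        (hJ.comp (eulerIter_diff f hf _ j)) _
      have hstep : eulerIter f h θ k + h k • f (eulerIter f h θ k)
          = eulerIter f h θ (k + 1) := rfl
      have hfd : fderiv ℝ (fun x : EuclideanSpace ℝ (Fin M) => x + h k • f x)
            (eulerIter f h θ k) =
          ContinuousLinearMap.id ℝ _ + h k • fderiv ℝ f (eulerIter f h θ k) := by
        rw [fderiv_fun_add (differentiableAt_fun_id) ((hf _).fun_const_smul _), fderiv_id',
          fderiv_fun_const_smul (hf _)]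
      rw [hlam k hkK, hshift,
        gradient_comp _ _ _ hgdiff hφdiff,
        hstep, ← ihk, hfd, map_add, map_smul]
      simp [ContinuousLinearMap.adjoint_id]
  have h0 := key K le_rfl
  simpa [eulerIter, Nat.sub_self] using h0
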